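/- Let m ≥ 1. Any two semistable representations of the Kronecker quiver K₂ of dimension vector (m, 2m) are isomorphic: if (V₋₁, V₀, f₀, f₁) and (V′₋₁, V′₀, f′₀, f′₁) are semistable with dim V₋₁ = dim V′₋₁ = m and dim V₀ = dim V′₀ = 2m, then there exist linear isomorphisms g₋₁ : V₋₁ → V′₋₁ and g₀ : V₀ → V′₀ such that g₀ ∘ f_j = f′_j ∘ g₋₁ for j = 0, 1. -/

import Mathlib

/-- A subrepresentation of a representation `f : Fin n → (V₁ →ₗ[ℂ] V₀)` of the `n`-arrow
Kronecker quiver: a pair of subspaces stable under all the maps. -/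
def KroneckerSubrep {n : ℕ} {V₁ V₀ : Type} [AddCommGroup V₁] [Module ℂ V₁]
    [AddCommGroup V₀] [Module ℂ V₀] (f : Fin n → V₁ →ₗ[ℂ] V₀)
    (W₁ : Submodule ℂ V₁) (W₀ : Submodule ℂ V₀) : Prop :=
  ∀ i, ∀ x ∈ W₁, f i x ∈ W₀

/-- Semistability of a representation of the `n`-arrow Kronecker quiver: every
subrepresentation `(W₁, W₀)` satisfies `dim V₁ · dim W₀ - dim V₀ · dim W₁ ≥ 0`. -/
def KroneckerSemistable {n : ℕ} {V₁ V₀ : Type} [AddCommGroup V₁] [Module ℂ V₁]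
    [AddCommGroup V₀] [Module ℂ V₀] (f : Fin n → V₁ →ₗ[ℂ] V₀) : Prop :=
  ∀ (W₁ : Submodule ℂ V₁) (W₀ : Submodule ℂ V₀), KroneckerSubrep f W₁ W₀ →
    0 ≤ (Module.finrank ℂ V₁ : ℤ) * (Module.finrank ℂ ↥W₀ : ℤ) -
        (Module.finrank ℂ V₀ : ℤ) * (Module.finrank ℂ ↥W₁ : ℤ)

/-- Key lemma: for a semistable representation of `K₂` with dimension vector `(m, 2m)`,
the coproduct map `V₁ × V₁ → V₀` is bijective. -/
lemma kronecker_coprod_bijective {V₁ V₀ : Type}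
    [AddCommGroup V₁] [Module ℂ V₁] [FiniteDimensional ℂ V₁]
    [AddCommGroup V₀] [Module ℂ V₀] [FiniteDimensional ℂ V₀]
    (f : Fin 2 → V₁ →ₗ[ℂ] V₀) (m : ℕ) (hm : 1 ≤ m)
    (h1 : Module.finrank ℂ V₁ = m) (h0 : Module.finrank ℂ V₀ = 2 * m)
    (hs : KroneckerSemistable f) :
    Function.Bijective ((f 0).coprod (f 1)) := by
  set Φ := (f 0).coprod (f 1) with hΦ
  -- surjectivity
  have hsub : KroneckerSubrep f ⊤ (LinearMap.range (f 0) ⊔ LinearMap.range (f 1)) := by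
    intro i x _
    fin_cases i
    · exact Submodule.mem_sup_left ⟨x, rfl⟩
    · exact Submodule.mem_sup_right ⟨x, rfl⟩
  have hineq := hs ⊤ (LinearMap.range (f 0) ⊔ LinearMap.range (f 1)) hsub
  rw [h1, h0, finrank_top, h1] at hineq
  have hW : 2 * m ≤ Module.finrank ℂ ↥(LinearMap.range (f 0) ⊔ LinearMap.range (f 1)) := by
    have hm' : (0:ℤ) < m := by exact_mod_cast hm
    have h2 : (m:ℤ) * (2*m) ≤ m * (Module.finrank ℂ
        ↥(LinearMap.range (f 0) ⊔ LinearMap.range (f 1)) : ℤ) := by push_cast at hineq ⊢; linarith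
    have h3 := le_of_mul_le_mul_left h2 hm'
    exact_mod_cast h3
  have htop : LinearMap.range (f 0) ⊔ LinearMap.range (f 1) = ⊤ := by
    apply Submodule.eq_top_of_finrank_eq
    have hle : Module.finrank ℂ ↥(LinearMap.range (f 0) ⊔ LinearMap.range (f 1)) ≤
        Module.finrank ℂ V₀ := Submodule.finrank_le _
    omega
  have hrange : LinearMap.range Φ = ⊤ := by
    rw [hΦ, LinearMap.range_coprod, htop]
  have hsurj : Function.Surjective Φ := LinearMap.range_eq_top.mp hrange
  -- injectivity from dimension count
  have hdim : Module.finrank ℂ (V₁ × V₁) = 2 * m := by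
    rw [Module.finrank_prod, h1]; ring
  have hrk := LinearMap.finrank_range_add_finrank_ker Φ
  rw [hrange, finrank_top, h0, hdim] at hrk
  have hker0 : Module.finrank ℂ ↥(LinearMap.ker Φ) = 0 := by omega
  have hker : LinearMap.ker Φ = ⊥ := Submodule.finrank_eq_zero.mp hker0
  exact ⟨LinearMap.ker_eq_bot.mp hker, hsurj⟩

/-- Any two semistable representations of `K₂` of dimension vector
`(m, 2m)` are isomorphic. -/
theorem semistable_dim_m_2m_unique_up_to_iso (m : ℕ) (hm : 1 ≤ m)
    (V₁ V₀ V₁' V₀' : Type)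
    [AddCommGroup V₁] [Module ℂ V₁] [FiniteDimensional ℂ V₁]
    [AddCommGroup V₀] [Module ℂ V₀] [FiniteDimensional ℂ V₀]
    [AddCommGroup V₁'] [Module ℂ V₁'] [FiniteDimensional ℂ V₁']
    [AddCommGroup V₀'] [Module ℂ V₀'] [FiniteDimensional ℂ V₀']
    (f : Fin 2 → V₁ →ₗ[ℂ] V₀) (f' : Fin 2 → V₁' →ₗ[ℂ] V₀')
    (h1 : Module.finrank ℂ V₁ = m) (h0 : Module.finrank ℂ V₀ = 2 * m)
    (h1' : Module.finrank ℂ V₁' = m) (h0' : Module.finrank ℂ V₀' = 2 * m)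
    (hs : KroneckerSemistable f) (hs' : KroneckerSemistable f') :
    ∃ (g₁ : V₁ ≃ₗ[ℂ] V₁') (g₀ : V₀ ≃ₗ[ℂ] V₀'),
      ∀ (j : Fin 2) (x : V₁), g₀ (f j x) = f' j (g₁ x) := by
  have hb : Function.Bijective ((f 0).coprod (f 1)) :=
    kronecker_coprod_bijective f m hm h1 h0 hs
  have hb' : Function.Bijective ((f' 0).coprod (f' 1)) :=
    kronecker_coprod_bijective f' m hm h1' h0' hs'
  let E : (V₁ × V₁) ≃ₗ[ℂ] V₀ := LinearEquiv.ofBijective _ hb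
  let E' : (V₁' × V₁') ≃ₗ[ℂ] V₀' := LinearEquiv.ofBijective _ hb'
  have hfr : Module.finrank ℂ V₁ = Module.finrank ℂ V₁' := by rw [h1, h1']
  let g₁ : V₁ ≃ₗ[ℂ] V₁' := LinearEquiv.ofFinrankEq _ _ hfr
  refine ⟨g₁, E.symm.trans ((g₁.prodCongr g₁).trans E'), ?_⟩
  have hE : ∀ p : V₁ × V₁, E p = f 0 p.1 + f 1 p.2 := fun p => rfl
  have hE' : ∀ p : V₁' × V₁', E' p = f' 0 p.1 + f' 1 p.2 := fun p => rfl
  intro j x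
  fin_cases j
  · show (E.symm.trans ((g₁.prodCongr g₁).trans E')) (f 0 x) = f' 0 (g₁ x)
    have h : f 0 x = E (x, 0) := by rw [hE]; simp
    simp only [LinearEquiv.trans_apply, h, LinearEquiv.symm_apply_apply]
    show E' (g₁ x, g₁ 0) = f' 0 (g₁ x)
    rw [hE']; simp
  · show (E.symm.trans ((g₁.prodCongr g₁).trans E')) (f 1 x) = f' 1 (g₁ x)
    have h : f 1 x = E (0, x) := by rw [hE]; simp
    simp only [LinearEquiv.trans_apply, h, LinearEquiv.symm_apply_apply]
    show E' (g₁ 0, g₁ x) = f' 1 (g₁ x)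
    rw [hE']; simp
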